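/- Let ρ_C, ρ_L, α > 0, I_0 ≥ 0 and τ_C, τ_B, τ_I > 0. All three components of the equilibrium P_3 = (ρ_L/α, 1/(τ_C ρ_C) − I_0(1 + τ_B/(τ_I(1 + τ_B ρ_L))), I_0/(τ_I(ρ_L + 1/τ_B))) are non-negative if and only if 0 ≤ I_0 ≤ I_0^crit, where I_0^crit = (1/(τ_C ρ_C))(1 − τ_B/(τ_B + τ_I(1 + τ_B ρ_L))). -/

import Mathlib

/-- **Biological meaningfulness of `P₃`.**
All three components of the equilibrium
`P₃ = (ρL/α, 1/(τCρC) − I₀(1 + τB/(τI(1 + τBρL))), I₀/(τI(ρL + 1/τB)))`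
are non-negative if and only if `0 ≤ I₀ ≤ I₀^crit`, where
`I₀^crit = (1/(τCρC))(1 − τB/(τB + τI(1 + τBρL)))`. -/
theorem P3_nonneg_iff
    (ρC ρL α I₀ τC τB τI : ℝ)
    (hρC : 0 < ρC) (hρL : 0 < ρL) (hα : 0 < α) (hI₀ : 0 ≤ I₀)
    (hτC : 0 < τC) (hτB : 0 < τB) (hτI : 0 < τI) :
    (0 ≤ ρL / α ∧
        0 ≤ 1 / (τC * ρC) - I₀ * (1 + τB / (τI * (1 + τB * ρL))) ∧
        0 ≤ I₀ / (τI * (ρL + 1 / τB))) ↔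
      (0 ≤ I₀ ∧
        I₀ ≤ (1 / (τC * ρC)) * (1 - τB / (τB + τI * (1 + τB * ρL)))) := by
  have h2 : (0:ℝ) < τI * (1 + τB * ρL) := by positivity
  have h3 : (0:ℝ) < τB + τI * (1 + τB * ρL) := by positivity
  have key : (0 ≤ 1 / (τC * ρC) - I₀ * (1 + τB / (τI * (1 + τB * ρL)))) ↔
      I₀ ≤ (1 / (τC * ρC)) * (1 - τB / (τB + τI * (1 + τB * ρL))) := by
    rw [sub_nonneg,
      show 1 + τB / (τI * (1 + τB * ρL))
          = (τB + τI * (1 + τB * ρL)) / (τI * (1 + τB * ρL)) by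
        field_simp; ring,
      show (1:ℝ) - τB / (τB + τI * (1 + τB * ρL))
          = (τI * (1 + τB * ρL)) / (τB + τI * (1 + τB * ρL)) by
        field_simp; ring,
      ← mul_div_assoc, div_le_iff₀ h2, ← mul_div_assoc, le_div_iff₀ h3]
  constructor
  · rintro ⟨-, hB, -⟩
    exact ⟨hI₀, key.mp hB⟩
  · rintro ⟨-, hcrit⟩
    exact ⟨by positivity, key.mpr hcrit, by positivity⟩
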